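/- Fix q ≥ 1 and α > 0. Let Δ ⊂ E(𝕃) ∪ E(𝕃*) be finite and let τ, τ' ∈ Ω^SI be two boundary conditions with τ ⪯ τ'. Then P^{SI,τ'}_{Δ,α,q} stochastically dominates P^{SI,τ}_{Δ,α,q} with respect to ⪯, i.e., ∫ f dP^{SI,τ}_{Δ,α,q} ≤ ∫ f dP^{SI,τ'}_{Δ,α,q} for every bounded measurable function f on {0,1}^{E(𝕃) ∪ E(𝕃*)} that is monotone increasing with respect to ⪯. -/

import Mathlib

open MeasureTheory Filter Topology
open scoped ENNReal

namespace SixVertex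

/-- Vertices of `ℤ²`. -/
abbrev Vx : Type := ℤ × ℤ
/-- Faces of `ℤ²`, i.e. elements of `(ℤ²)* = ℤ² + (1/2,1/2)`; the face `p` corresponds to the
point `p + (1/2,1/2)`, i.e. to the unit square with corners `p`, `p+(1,0)`, `p+(0,1)`, `p+(1,1)`. -/
abbrev Face : Type := ℤ × ℤ

/-- `ℓ¹` (= graph) distance between faces in `(ℤ²)*`. -/
def fdist (p q : Face) : ℕ := (p.1 - q.1).natAbs + (p.2 - q.2).natAbs

/-- `ℓ¹` (= graph) distance between vertices of `ℤ²`. -/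
def vdist (x y : Vx) : ℕ := (x.1 - y.1).natAbs + (x.2 - y.2).natAbs

/-- Adjacency in `ℤ²` (or in `(ℤ²)*`). -/
def VAdj (x y : Vx) : Prop := vdist x y = 1

/-- The diagonal edges `E(𝕃) ∪ E(𝕃*)`, encoded as pairs `(x, b)` where `x ∈ ℤ²` is the vertex
of `ℤ²` the edge passes through, and `b` tells which of the two diagonals at `x` it is.
The cross at a vertex `x` consists of the two edges `(x, false)` and `(x, true)`. -/
abbrev Edge : Type := Vx × Bool

/-- The two endpoints (faces) of a diagonal edge: `(x, false)` joins the faces `x - (1,1)` and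
`x` (the two faces at `x` of the parity of `x`), while `(x, true)` joins `x - (1,0)` and
`x - (0,1)`. -/
def ep (e : Edge) : Face × Face :=
  if e.2 then (e.1 - (1, 0), e.1 - (0, 1)) else (e.1 - (1, 1), e.1)

/-- The edge `e` belongs to `E(𝕃)` (otherwise it belongs to `E(𝕃*)`). -/
def inL (e : Edge) : Prop := (Even (e.1.1 + e.1.2) ↔ e.2 = false)

/-- Configurations `η ∈ {0,1}^{E(𝕃) ∪ E(𝕃*)}` (the pair `(η⁰, η¹)` is encoded as a single
function on all diagonal edges). -/
abbrev SIConf : Type := Edge → Bool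

/-- The cross at `x` is open in `η`. -/
def OpenCross (η : SIConf) (x : Vx) : Prop := η (x, false) = true ∧ η (x, true) = true

/-- No cross is closed in `η`, i.e. `η` is a superimposed configuration (`η ∈ Ω^SI`). -/
def NoClosedCross (η : SIConf) : Prop := ∀ x : Vx, η (x, false) = true ∨ η (x, true) = true

/-- Two faces joined by an open edge of `η`. -/
def OpenAdj (η : SIConf) (p q : Face) : Prop :=
  ∃ e : Edge, η e = true ∧ (ep e = (p, q) ∨ ep e = (q, p))

/-- Connectivity by open paths. -/
def ConnectedIn (η : SIConf) : Face → Face → Prop := Relation.ReflTransGen (OpenAdj η)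

/-- The cluster of the face `p` in `η`. -/
def cluster (η : SIConf) (p : Face) : Set Face := {q | ConnectedIn η p q}

/-- The face `p` is incident to some edge of `Δ`. -/
def TouchesDelta (Δ : Set Edge) (p : Face) : Prop := ∃ e ∈ Δ, (ep e).1 = p ∨ (ep e).2 = p

/-- `N_Δ(η)`: the number of open crosses of `η` having an edge in `Δ`. -/
noncomputable def NDelta (Δ : Set Edge) (η : SIConf) : ℕ :=
  Set.ncard {x : Vx | OpenCross η x ∧ ((x, false) ∈ Δ ∨ (x, true) ∈ Δ)}

/-- `k_Δ(η) = k_Δ(η⁰) + k_Δ(η¹)`: the total number of clusters of `η` (equivalently, of `η⁰`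
in `𝕃` plus those of `η¹` in `𝕃*`, since open edges never join faces of different parity)
containing a face incident to an edge of `Δ`. -/
noncomputable def kDelta (Δ : Set Edge) (η : SIConf) : ℕ :=
  Set.ncard {C : Set Face | ∃ p : Face, TouchesDelta Δ p ∧ C = cluster η p}

/-- `η` is a superimposed configuration agreeing with `τ` off `Δ` (`η ∈ Ω^{SI,τ}_Δ`). -/
def SIok (Δ : Set Edge) (τ : SIConf) (η : SIConf) : Prop :=
  NoClosedCross η ∧ ∀ e ∉ Δ, η e = τ e

/-- The weight `α^{N_Δ(η)} q^{k_Δ(η)}` of the superimposed model. -/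
noncomputable def SIweight (Δ : Set Edge) (α q : ℝ) (η : SIConf) : ℝ≥0∞ :=
  ENNReal.ofReal (α ^ NDelta Δ η * q ^ kDelta Δ η)

/-- The finite-volume superimposed measure `P^{SI,τ}_{Δ,α,q}`. -/
noncomputable def SIfin (Δ : Set Edge) (α q : ℝ) (τ : SIConf) : Measure SIConf :=
  (∑' η : {η : SIConf // SIok Δ τ η}, SIweight Δ α q η.1)⁻¹ •
    Measure.sum (fun η : {η : SIConf // SIok Δ τ η} => SIweight Δ α q η.1 • Measure.dirac η.1)

/-- The all-open ("wired-wired", `11`) boundary condition. -/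
def wiredwired : SIConf := fun _ => true

/-! ### Diamond domains -/

/-- The diamond `Λ = {u : dist(u,v) ≤ n}` of faces. -/
def diamond (v : Face) (n : ℕ) : Set Face := {u | fdist u v ≤ n}

/-- `(v, n)` determines a diamond domain: `v ∈ 𝕃` and `n` a positive even integer. -/
def IsDiamond (v : Face) (n : ℕ) : Prop := Even (v.1 + v.2) ∧ 0 < n ∧ Even n

/-- The edge of `E(𝕃)` in the cross at `x`. -/
def LEdgeAt (x : Vx) : Edge := if Even (x.1 + x.2) then (x, false) else (x, true)

/-- `Δ(Λ)`: edges of `𝕃` with both endpoints in `Λ`, together with their dual edges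
(equivalently: the full crosses whose `𝕃`-edge has both endpoints in `Λ`). -/
def deltaOf (v : Face) (n : ℕ) : Set Edge :=
  {e | (ep (LEdgeAt e.1)).1 ∈ diamond v n ∧ (ep (LEdgeAt e.1)).2 ∈ diamond v n}

/-! ### Spin configurations -/

/-- Spin configurations on the faces; `true` is the spin `+`, `false` the spin `-`. -/
abbrev SpinConf : Type := Face → Bool

/-- The ice rule: at each vertex of `ℤ²`, at least one of the two diagonals consists of
equal spins. -/
def IceRule (σ : SpinConf) : Prop :=
  ∀ x : Vx, σ (x - (1, 1)) = σ x ∨ σ (x - (1, 0)) = σ (x - (0, 1))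

/-- `x` is a saddle point of `σ`: both diagonals at `x` have constant spin. -/
def Saddle (σ : SpinConf) (x : Vx) : Prop :=
  σ (x - (1, 1)) = σ x ∧ σ (x - (1, 0)) = σ (x - (0, 1))

/-- The face `p` is incident to the vertex `x` of `ℤ²` (i.e. `x` is a corner of `p`). -/
def FaceInc (p : Face) (x : Vx) : Prop :=
  ∃ a ∈ ({0, 1} : Set ℤ), ∃ b ∈ ({0, 1} : Set ℤ), p = x - (a, b)

/-- Vertices of `𝛬̂`: vertices of `ℤ²` on or inside the circuit `∂†Λ`, i.e. corners of
faces of `Λ`. -/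
def HatVert (v : Face) (n : ℕ) (x : Vx) : Prop := ∃ p ∈ diamond v n, FaceInc p x

/-- Internal vertices of `𝛬̂`: vertices all of whose four incident `ℤ²`-edges belong to the
induced subgraph `𝛬̂`. -/
def InternalVert (v : Face) (n : ℕ) (x : Vx) : Prop :=
  HatVert v n x ∧ ∀ y : Vx, VAdj x y → HatVert v n y

/-- `#saddle_Λ(σ)`: the number of saddle points of `σ` among internal vertices of `𝛬̂`. -/
noncomputable def saddleCount (v : Face) (n : ℕ) (σ : SpinConf) : ℕ :=
  Set.ncard {x : Vx | InternalVert v n x ∧ Saddle σ x}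

/-- `Ω^{spin,ij}_Λ`: spin configurations satisfying the ice rule, equal to `i` on the outer
boundary of `Λ` and on all of `𝕃*` outside `Λ`, and equal to `j` on the inner boundary of `Λ`
and on all of `𝕃` outside `Λ`.  (All faces at distance `≥ n` from the center receive the
boundary spin of their sublattice.) -/
def OmegaSpin (v : Face) (n : ℕ) (i j : Bool) (σ : SpinConf) : Prop :=
  IceRule σ ∧ ∀ p : Face, n ≤ fdist p v → σ p = (if Even (p.1 + p.2) then j else i)

/-- The weight `c^{#saddle_Λ(σ)}`. -/
noncomputable def spinWeight (v : Face) (n : ℕ) (c : ℝ) (σ : SpinConf) : ℝ≥0∞ :=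
  ENNReal.ofReal (c ^ saddleCount v n σ)

/-- The finite-volume spin measure `P^{spin,ij}_{Λ,c}`. -/
noncomputable def spinFin (v : Face) (n : ℕ) (c : ℝ) (i j : Bool) : Measure SpinConf :=
  (∑' σ : {σ : SpinConf // OmegaSpin v n i j σ}, spinWeight v n c σ.1)⁻¹ •
    Measure.sum (fun σ : {σ : SpinConf // OmegaSpin v n i j σ} =>
      spinWeight v n c σ.1 • Measure.dirac σ.1)

/-- Compatibility `σ ∼ η`: every open edge of `η` has endpoints with equal spins. -/
def Compat (σ : SpinConf) (η : SIConf) : Prop :=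
  ∀ e : Edge, η e = true → σ (ep e).1 = σ (ep e).2

/-! ### Bernoulli site percolation on `ℤ²` and its critical probability -/

/-- `ν` is the law of i.i.d. Bernoulli(`p`) site percolation on `ℤ²`. -/
def IsBernoulliField (p : ℝ) (ν : Measure (Vx → Bool)) : Prop :=
  IsProbabilityMeasure ν ∧
    ∀ (S : Finset Vx) (s : Vx → Bool),
      ν {ω | ∀ x ∈ S, ω x = s x} =
        ∏ x ∈ S, (if s x = true then ENNReal.ofReal p else ENNReal.ofReal (1 - p))

/-- Site-percolation adjacency: neighbouring open sites. -/
def SiteOpenAdj (ω : Vx → Bool) (x y : Vx) : Prop := VAdj x y ∧ ω x = true ∧ ω y = true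

/-- The open cluster of a site. -/
def siteCluster (ω : Vx → Bool) (x : Vx) : Set Vx :=
  {y | Relation.ReflTransGen (SiteOpenAdj ω) x y}

/-- The critical probability `p_c` of Bernoulli site percolation on `ℤ²`: the supremum of
`p ∈ [0,1]` for which Bernoulli(`p`) site percolation a.s. has no infinite open cluster. -/
noncomputable def pcSite : ℝ :=
  sSup {p : ℝ | 0 ≤ p ∧ p ≤ 1 ∧ ∀ ν : Measure (Vx → Bool), IsBernoulliField p ν →
    ν {ω | ∃ x, ω x = true ∧ (siteCluster ω x).Infinite} = 0}

/-! ### Infinite-volume limits -/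

/-- A sequence of diamond domains increasing to `(ℤ²)*`. -/
def DiamondExhaustion (v : ℕ → Face) (n : ℕ → ℕ) : Prop :=
  (∀ k, IsDiamond (v k) (n k)) ∧
  (∀ k, diamond (v k) (n k) ⊆ diamond (v (k + 1)) (n (k + 1))) ∧
  (∀ u : Face, ∃ k, u ∈ diamond (v k) (n k))

/-- `P` is the weak limit of the finite-volume superimposed measures with boundary condition
`τ` along any sequence of diamond domains increasing to `(ℤ²)*`. -/
def IsSILimitFor (α q : ℝ) (τ : SIConf) (P : Measure SIConf) : Prop :=
  ∀ (v : ℕ → Face) (n : ℕ → ℕ), DiamondExhaustion v n →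
    ∀ f : SIConf → ℝ, Continuous f → (∃ M, ∀ η, |f η| ≤ M) →
      Tendsto (fun k => ∫ η, f η ∂(SIfin (deltaOf (v k) (n k)) α q τ)) atTop
        (nhds (∫ η, f η ∂P))

/-- `P` is the infinite-volume superimposed measure `P^{SI}_{α,q}`: the common weak limit of
the finite-volume measures over all boundary conditions. -/
def IsSILimit (α q : ℝ) (P : Measure SIConf) : Prop :=
  IsProbabilityMeasure P ∧ ∀ τ : SIConf, NoClosedCross τ → IsSILimitFor α q τ P

/-- `P` is the weak limit `P^{spin,ij}_c` of the finite-volume spin measures along any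
sequence of diamond domains increasing to `(ℤ²)*`. -/
def IsSpinLimit (c : ℝ) (i j : Bool) (P : Measure SpinConf) : Prop :=
  IsProbabilityMeasure P ∧
    ∀ (v : ℕ → Face) (n : ℕ → ℕ), DiamondExhaustion v n →
      ∀ f : SpinConf → ℝ, Continuous f → (∃ M, ∀ σ, |f σ| ≤ M) →
        Tendsto (fun k => ∫ σ, f σ ∂(spinFin (v k) (n k) c i j)) atTop (nhds (∫ σ, f σ ∂P))

end SixVertex

namespace SixVertex

/-- The partial order `⪯` on `{0,1}^{E(𝕃) ∪ E(𝕃*)}`: pointwise `≤` on `E(𝕃)`-coordinates and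
pointwise `≥` on `E(𝕃*)`-coordinates. -/
def PO (η ξ : SIConf) : Prop := ∀ e : Edge, (inL e → η e ≤ ξ e) ∧ (¬ inL e → ξ e ≤ η e)
open scoped Classical in
/-- PO-meet: pointwise min on `E(𝕃)`, max on `E(𝕃*)`. -/
noncomputable def pomeet (η ξ : SIConf) : SIConf :=
  fun e => if inL e then η e && ξ e else η e || ξ e

open scoped Classical in
/-- PO-join: pointwise max on `E(𝕃)`, min on `E(𝕃*)`. -/
noncomputable def pojoin (η ξ : SIConf) : SIConf :=
  fun e => if inL e then η e || ξ e else η e && ξ e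

/-- pointwise min / max -/
def pmin (η ξ : SIConf) : SIConf := fun e => η e && ξ e
def pmax (η ξ : SIConf) : SIConf := fun e => η e || ξ e

lemma openAdj_symm {η : SIConf} {p q : Face} (h : OpenAdj η p q) : OpenAdj η q p := by
  obtain ⟨e, he, h'⟩ := h; exact ⟨e, he, h'.symm⟩

lemma connectedIn_symm {η : SIConf} {p q : Face} (h : ConnectedIn η p q) : ConnectedIn η q p :=
  by haveI : Std.Symm (OpenAdj η) := ⟨fun _ _ h => openAdj_symm h⟩; exact Std.Symm.symm (r := Relation.ReflTransGen (OpenAdj η)) _ _ h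

lemma mem_cluster_self (η : SIConf) (p : Face) : p ∈ cluster η p := Relation.ReflTransGen.refl

lemma cluster_eq_iff {η : SIConf} {p q : Face} :
    cluster η p = cluster η q ↔ ConnectedIn η p q := by
  constructor
  · intro h
    have : q ∈ cluster η p := h ▸ mem_cluster_self η q
    exact this
  · intro h
    ext r
    exact ⟨fun hr => (connectedIn_symm h).trans hr, fun hr => h.trans hr⟩

lemma openAdj_parity {η : SIConf} {p q : Face} (h : OpenAdj η p q) :
    (Even (p.1 + p.2) ↔ Even (q.1 + q.2)) := by
  obtain ⟨⟨⟨x1, x2⟩, b⟩, -, h⟩ := h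
  cases b <;> rcases h with h | h <;> simp [ep, Prod.mk_sub_mk, Prod.ext_iff] at h <;>
      obtain ⟨⟨h1, h2⟩, h3, h4⟩ := h <;> simp only [Int.even_iff] <;> omega

lemma connectedIn_parity {η : SIConf} {p q : Face} (h : ConnectedIn η p q) :
    (Even (p.1 + p.2) ↔ Even (q.1 + q.2)) := by
  induction h with
  | refl => exact Iff.rfl
  | tail _ hadj ih => exact ih.trans (openAdj_parity hadj)

/-- parity of an edge: parity of its endpoints. -/
def epar (e : Edge) : Prop := Even ((ep e).1.1 + (ep e).1.2)

lemma epar_snd (e : Edge) : (epar e ↔ Even ((ep e).2.1 + (ep e).2.2)) := by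
  obtain ⟨x, b⟩ := e
  obtain ⟨x1, x2⟩ := x
  cases b <;> simp [epar, ep, Prod.mk_sub_mk, Int.even_iff] <;> omega

lemma epar_iff_inL (e : Edge) : epar e ↔ inL e := by
  obtain ⟨x, b⟩ := e
  obtain ⟨x1, x2⟩ := x
  cases b <;> simp [epar, ep, inL, Prod.mk_sub_mk, Int.even_iff] <;> omega

lemma openAdj_mono {η ζ : SIConf} (hle : ∀ e, η e = true → ζ e = true) {p q : Face}
    (h : OpenAdj η p q) : OpenAdj ζ p q := by
  obtain ⟨e, he, h'⟩ := h; exact ⟨e, hle e he, h'⟩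

lemma connectedIn_mono {η ζ : SIConf} (hle : ∀ e, η e = true → ζ e = true) {p q : Face}
    (h : ConnectedIn η p q) : ConnectedIn ζ p q :=
  Relation.ReflTransGen.mono (r := OpenAdj η) (p := OpenAdj ζ) (fun _ _ h => openAdj_mono hle h) p q h

lemma connectedIn_of_agree {η ζ : SIConf} {p q : Face}
    (hagree : ∀ e : Edge, (epar e ↔ Even (p.1 + p.2)) → η e = ζ e)
    (h : ConnectedIn η p q) : ConnectedIn ζ p q := by
  induction h with
  | refl => exact Relation.ReflTransGen.refl
  | @tail b c hpb hadj ih =>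
    refine ih.tail ?_
    obtain ⟨e, he, hor⟩ := hadj
    have hparb : (Even (b.1 + b.2) ↔ Even (p.1 + p.2)) := (connectedIn_parity hpb).symm
    have hpare : (epar e ↔ Even (p.1 + p.2)) := by
      rcases hor with h' | h'
      · rw [epar, h']; exact hparb
      · rw [(epar_snd e), h']; exact hparb
    exact ⟨e, (hagree e hpare) ▸ he, hor⟩

lemma cluster_congr {η ζ : SIConf} {p : Face}
    (hagree : ∀ e : Edge, (epar e ↔ Even (p.1 + p.2)) → η e = ζ e) :
    cluster η p = cluster ζ p := by
  ext q
  exact ⟨fun h => connectedIn_of_agree hagree h,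
    fun h => connectedIn_of_agree (fun e he => (hagree e he).symm) h⟩

lemma update_le {ζ : SIConf} {e₀ : Edge} : ∀ e, ζ e = true → Function.update ζ e₀ true e = true := by
  intro e he
  by_cases h : e = e₀
  · subst h; simp
  · rwa [Function.update_of_ne h]

lemma openAdj_update_iff {ζ : SIConf} {e₀ : Edge} {p q : Face} :
    OpenAdj (Function.update ζ e₀ true) p q ↔
      OpenAdj ζ p q ∨ (ep e₀ = (p, q) ∨ ep e₀ = (q, p)) := by
  constructor
  · rintro ⟨e, he, hor⟩
    by_cases h : e = e₀
    · subst h; right; exact hor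
    · left; exact ⟨e, by rwa [Function.update_of_ne h] at he, hor⟩
  · rintro (⟨e, he, hor⟩ | hor)
    · exact openAdj_mono update_le ⟨e, he, hor⟩
    · exact ⟨e₀, by simp, hor⟩

lemma connectedIn_update_iff {ζ : SIConf} {e₀ : Edge} {p₀ q₀ : Face} (hpq : ep e₀ = (p₀, q₀))
    {r s : Face} :
    ConnectedIn (Function.update ζ e₀ true) r s ↔
      ConnectedIn ζ r s ∨ (ConnectedIn ζ r p₀ ∧ ConnectedIn ζ q₀ s) ∨
        (ConnectedIn ζ r q₀ ∧ ConnectedIn ζ p₀ s) := by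
  constructor
  · intro h
    induction h with
    | refl => exact Or.inl Relation.ReflTransGen.refl
    | @tail b c hrb hadj ih =>
      rcases openAdj_update_iff.1 hadj with hadj' | hor
      · rcases ih with h | ⟨h1, h2⟩ | ⟨h1, h2⟩
        · exact Or.inl (h.tail hadj')
        · exact Or.inr (Or.inl ⟨h1, h2.tail hadj'⟩)
        · exact Or.inr (Or.inr ⟨h1, h2.tail hadj'⟩)
      · rcases hor with h' | h'
        · rw [hpq, Prod.ext_iff] at h'
          obtain ⟨hb, hc⟩ := h'
          subst hb; subst hc
          rcases ih with h | ⟨h1, h2⟩ | ⟨h1, h2⟩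
          · exact Or.inr (Or.inl ⟨h, Relation.ReflTransGen.refl⟩)
          · exact Or.inr (Or.inl ⟨h1, Relation.ReflTransGen.refl⟩)
          · exact Or.inl h1
        · rw [hpq, Prod.ext_iff] at h'
          obtain ⟨hb, hc⟩ := h'
          subst hb; subst hc
          rcases ih with h | ⟨h1, h2⟩ | ⟨h1, h2⟩
          · exact Or.inr (Or.inr ⟨h, Relation.ReflTransGen.refl⟩)
          · exact Or.inl h1
          · exact Or.inr (Or.inr ⟨h1, Relation.ReflTransGen.refl⟩)
  · rintro (h | ⟨h1, h2⟩ | ⟨h1, h2⟩)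
    · exact connectedIn_mono update_le h
    · exact ((connectedIn_mono update_le h1).tail ⟨e₀, by simp, Or.inl hpq⟩).trans
        (connectedIn_mono update_le h2)
    · exact ((connectedIn_mono update_le h1).tail ⟨e₀, by simp, Or.inr hpq⟩).trans
        (connectedIn_mono update_le h2)

/-- faces touching Δ -/
def TD (Δ : Set Edge) : Set Face := {p | TouchesDelta Δ p}

lemma TD_finite {Δ : Set Edge} (hΔ : Δ.Finite) : (TD Δ).Finite := by
  have hsub : TD Δ ⊆ (fun e => (ep e).1) '' Δ ∪ (fun e => (ep e).2) '' Δ := by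
    rintro p ⟨e, he, h | h⟩
    · exact Or.inl ⟨e, he, h⟩
    · exact Or.inr ⟨e, he, h⟩
  exact ((hΔ.image _).union (hΔ.image _)).subset hsub

lemma kDelta_eq (Δ : Set Edge) (η : SIConf) : kDelta Δ η = (cluster η '' TD Δ).ncard := by
  unfold kDelta
  congr 1
  ext C
  constructor
  · rintro ⟨p, h1, h2⟩; exact ⟨p, h1, h2.symm⟩
  · rintro ⟨p, h1, h2⟩; exact ⟨p, h1, h2.symm⟩

lemma mem_TD_of_edge {Δ : Set Edge} {e : Edge} (he : e ∈ Δ) :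
    (ep e).1 ∈ TD Δ ∧ (ep e).2 ∈ TD Δ :=
  ⟨⟨e, he, Or.inl rfl⟩, ⟨e, he, Or.inr rfl⟩⟩

lemma kDelta_update_of_conn {Δ : Set Edge} {ζ : SIConf} {e₀ : Edge}
    (hconn : ConnectedIn ζ (ep e₀).1 (ep e₀).2) :
    kDelta Δ (Function.update ζ e₀ true) = kDelta Δ ζ := by
  rw [kDelta_eq, kDelta_eq]
  congr 1
  apply Set.image_congr
  intro p _
  ext s
  constructor
  · intro h
    rcases (connectedIn_update_iff rfl).1 h with h | ⟨h1, h2⟩ | ⟨h1, h2⟩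
    · exact h
    · exact (h1.trans hconn).trans h2
    · exact (h1.trans (connectedIn_symm hconn)).trans h2
  · intro h
    exact connectedIn_mono update_le h

lemma kDelta_update_of_not_conn {Δ : Set Edge} (hΔ : Δ.Finite) {ζ : SIConf} {e₀ : Edge}
    (he₀ : e₀ ∈ Δ) (hn : ¬ ConnectedIn ζ (ep e₀).1 (ep e₀).2) :
    kDelta Δ ζ = kDelta Δ (Function.update ζ e₀ true) + 1 := by
  set p₀ := (ep e₀).1 with hp₀
  set q₀ := (ep e₀).2 with hq₀
  have hpq : ep e₀ = (p₀, q₀) := rfl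
  set ζ' := Function.update ζ e₀ true with hζ'
  set Cp := cluster ζ p₀ with hCp
  set Cq := cluster ζ q₀ with hCq
  set U := Cp ∪ Cq with hU
  have hTp : p₀ ∈ TD Δ := (mem_TD_of_edge he₀).1
  have hTq : q₀ ∈ TD Δ := (mem_TD_of_edge he₀).2
  -- cluster in ζ' of a face connected to p₀ or q₀ is U
  have hclU : ∀ r : Face, (ConnectedIn ζ r p₀ ∨ ConnectedIn ζ r q₀) → cluster ζ' r = U := by
    intro r hr
    ext s
    rw [show (s ∈ cluster ζ' r) = ConnectedIn ζ' r s from rfl]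
    rw [connectedIn_update_iff hpq]
    constructor
    · rintro (h | ⟨h1, h2⟩ | ⟨h1, h2⟩)
      · rcases hr with hr | hr
        · exact Or.inl ((connectedIn_symm hr).trans h)
        · exact Or.inr ((connectedIn_symm hr).trans h)
      · exact Or.inr h2
      · exact Or.inl h2
    · rintro (h | h)
      · rcases hr with hr | hr
        · exact Or.inl (hr.trans h)
        · exact Or.inr (Or.inr ⟨hr, h⟩)
      · rcases hr with hr | hr
        · exact Or.inr (Or.inl ⟨hr, h⟩)
        · exact Or.inl (hr.trans h)
  have hclsame : ∀ r : Face, ¬ ConnectedIn ζ r p₀ → ¬ ConnectedIn ζ r q₀ →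
      cluster ζ' r = cluster ζ r := by
    intro r h1 h2
    ext s
    rw [show (s ∈ cluster ζ' r) = ConnectedIn ζ' r s from rfl,
      show (s ∈ cluster ζ r) = ConnectedIn ζ r s from rfl]
    rw [connectedIn_update_iff hpq]
    constructor
    · rintro (h | ⟨ha, hb⟩ | ⟨ha, hb⟩)
      · exact h
      · exact absurd ha h1
      · exact absurd ha h2
    · exact Or.inl
  have hSeq : cluster ζ' '' TD Δ = (cluster ζ '' TD Δ \ {Cp, Cq}) ∪ {U} := by
    ext C
    constructor
    · rintro ⟨r, hrT, rfl⟩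
      by_cases hr : ConnectedIn ζ r p₀ ∨ ConnectedIn ζ r q₀
      · exact Or.inr (hclU r hr)
      · push_neg at hr
        rw [hclsame r hr.1 hr.2]
        refine Or.inl ⟨⟨r, hrT, rfl⟩, ?_⟩
        rintro (h | h)
        · exact hr.1 (cluster_eq_iff.1 h)
        · exact hr.2 (cluster_eq_iff.1 h)
    · rintro (⟨⟨r, hrT, rfl⟩, hnot⟩ | hC)
      · simp only [Set.mem_insert_iff, Set.mem_singleton_iff] at hnot
        push_neg at hnot
        have h1 : ¬ ConnectedIn ζ r p₀ := fun h => hnot.1 (cluster_eq_iff.2 h)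
        have h2 : ¬ ConnectedIn ζ r q₀ := fun h => hnot.2 (cluster_eq_iff.2 h)
        exact ⟨r, hrT, (hclsame r h1 h2).symm ▸ rfl⟩
      · rw [Set.mem_singleton_iff] at hC
        subst hC
        exact ⟨p₀, hTp, hclU p₀ (Or.inl Relation.ReflTransGen.refl)⟩
  have hfinS : (cluster ζ '' TD Δ).Finite := (TD_finite hΔ).image _
  have hCpS : Cp ∈ cluster ζ '' TD Δ := ⟨p₀, hTp, rfl⟩
  have hCqS : Cq ∈ cluster ζ '' TD Δ := ⟨q₀, hTq, rfl⟩
  have hne : Cp ≠ Cq := fun h => hn (cluster_eq_iff.1 h)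
  have hUnot : U ∉ cluster ζ '' TD Δ \ {Cp, Cq} := by
    rintro ⟨⟨r, hrT, hr⟩, hnot⟩
    have hpU : p₀ ∈ U := Or.inl (mem_cluster_self ζ p₀)
    rw [← hr] at hpU
    have h2 : cluster ζ r = Cp := cluster_eq_iff.2 hpU
    exact hnot (Or.inl (hr.symm.trans h2))
  have hsplit : cluster ζ '' TD Δ = (cluster ζ '' TD Δ \ {Cp, Cq}) ∪ {Cp, Cq} := by
    rw [Set.diff_union_of_subset]
    rintro C (h | h)
    · exact h ▸ hCpS
    · rw [Set.mem_singleton_iff] at h; exact h ▸ hCqS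
  have hfinD : (cluster ζ '' TD Δ \ {Cp, Cq}).Finite := hfinS.diff
  have hd1 : Disjoint (cluster ζ '' TD Δ \ {Cp, Cq}) {Cp, Cq} :=
    Set.disjoint_sdiff_left
  have hd2 : Disjoint (cluster ζ '' TD Δ \ {Cp, Cq}) ({U} : Set (Set Face)) := by
    rw [Set.disjoint_singleton_right]; exact hUnot
  rw [kDelta_eq, kDelta_eq, hSeq]
  rw [Set.ncard_union_eq hd2 hfinD (Set.finite_singleton _), Set.ncard_singleton]
  conv_lhs => rw [hsplit]
  rw [Set.ncard_union_eq hd1 hfinD ((Set.finite_singleton Cq).insert Cp),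
    Set.ncard_pair hne]

lemma kDelta_update_le {Δ : Set Edge} (hΔ : Δ.Finite) {ζ : SIConf} {e₀ : Edge} (he₀ : e₀ ∈ Δ) :
    kDelta Δ (Function.update ζ e₀ true) ≤ kDelta Δ ζ := by
  by_cases h : ConnectedIn ζ (ep e₀).1 (ep e₀).2
  · rw [kDelta_update_of_conn h]
  · rw [kDelta_update_of_not_conn hΔ he₀ h]; omega

lemma k_inc_mono {Δ : Set Edge} (hΔ : Δ.Finite) {ζ ζ' : SIConf}
    (hle : ∀ e, ζ e = true → ζ' e = true) {e₀ : Edge} (he₀ : e₀ ∈ Δ) :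
    kDelta Δ (Function.update ζ e₀ true) + kDelta Δ ζ' ≤
      kDelta Δ ζ + kDelta Δ (Function.update ζ' e₀ true) := by
  by_cases h1 : ConnectedIn ζ (ep e₀).1 (ep e₀).2
  · rw [kDelta_update_of_conn h1, kDelta_update_of_conn (connectedIn_mono hle h1)]
  · by_cases h2 : ConnectedIn ζ' (ep e₀).1 (ep e₀).2
    · rw [kDelta_update_of_conn h2]
      have := kDelta_update_le hΔ (ζ := ζ) he₀
      omega
    · rw [kDelta_update_of_not_conn hΔ he₀ h1, kDelta_update_of_not_conn hΔ he₀ h2]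
      omega

/-- add a finite set of edges to a configuration -/
def addA (ζ : SIConf) (A : Finset Edge) : SIConf := fun e => ζ e || decide (e ∈ A)

lemma addA_empty (ζ : SIConf) : addA ζ ∅ = ζ := by
  funext e; simp [addA]

lemma addA_insert (ζ : SIConf) (e₀ : Edge) (A : Finset Edge) :
    addA ζ (insert e₀ A) = Function.update (addA ζ A) e₀ true := by
  funext e
  by_cases h : e = e₀
  · subst h; simp [addA]
  · rw [Function.update_of_ne h]
    simp [addA, h]

lemma k_supermod_aux {Δ : Set Edge} (hΔ : Δ.Finite) (A : Finset Edge) (ω β : SIConf)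
    (hle : ∀ e, ω e = true → β e = true) (hA : ∀ e ∈ A, e ∈ Δ) :
    kDelta Δ (addA ω A) + kDelta Δ β ≤ kDelta Δ ω + kDelta Δ (addA β A) := by
  induction A using Finset.induction_on with
  | empty => rw [addA_empty, addA_empty]
  | @insert e₀ A he₀A ih =>
    have hle' : ∀ e, addA ω A e = true → addA β A e = true := by
      intro e he
      rcases Bool.or_eq_true_iff.1 he with h | h
      · exact Bool.or_eq_true_iff.2 (Or.inl (hle e h))
      · exact Bool.or_eq_true_iff.2 (Or.inr h)
    have hinc := k_inc_mono hΔ hle' (hA e₀ (Finset.mem_insert_self e₀ A))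
    have hih := ih (fun e he => hA e (Finset.mem_insert_of_mem he))
    rw [addA_insert, addA_insert]
    omega

lemma k_supermod {Δ : Set Edge} (hΔ : Δ.Finite) (η ξ : SIConf)
    (hoff : ∀ e ∉ Δ, η e = true → ξ e = true) :
    kDelta Δ η + kDelta Δ ξ ≤ kDelta Δ (pmin η ξ) + kDelta Δ (pmax η ξ) := by
  classical
  set A : Finset Edge := hΔ.toFinset.filter (fun e => η e = true ∧ ξ e = false) with hA
  have h1 : addA (pmin η ξ) A = η := by
    funext e
    simp only [addA, pmin, hA, Finset.mem_filter, Set.Finite.mem_toFinset]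
    cases hη : η e
    · simp [hη]
    · cases hξ : ξ e
      · by_cases hΔe : e ∈ Δ
        · simp [hΔe, hη, hξ]
        · exact absurd (hoff e hΔe hη) (by simp [hξ])
      · simp [hξ]
  have h2 : addA ξ A = pmax η ξ := by
    funext e
    simp only [addA, pmax, hA, Finset.mem_filter, Set.Finite.mem_toFinset]
    cases hη : η e
    · simp [hη]
    · cases hξ : ξ e
      · by_cases hΔe : e ∈ Δ
        · simp [hΔe, hη, hξ]
        · exact absurd (hoff e hΔe hη) (by simp [hξ])
      · simp [hξ]
  have hle : ∀ e, pmin η ξ e = true → ξ e = true := by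
    intro e he
    exact (Bool.and_eq_true_iff.1 he).2
  have := k_supermod_aux hΔ A (pmin η ξ) ξ hle (fun e he => by
    simp only [hA, Finset.mem_filter, Set.Finite.mem_toFinset] at he; exact he.1)
  rw [h1, h2] at this
  omega

/-- even-cluster count -/
noncomputable def kE (Δ : Set Edge) (ζ : SIConf) : ℕ :=
  (cluster ζ '' (TD Δ ∩ {p | Even (p.1 + p.2)})).ncard

/-- odd-cluster count -/
noncomputable def kO (Δ : Set Edge) (ζ : SIConf) : ℕ :=
  (cluster ζ '' (TD Δ ∩ {p | ¬ Even (p.1 + p.2)})).ncard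

lemma kDelta_split {Δ : Set Edge} (hΔ : Δ.Finite) (ζ : SIConf) :
    kDelta Δ ζ = kE Δ ζ + kO Δ ζ := by
  rw [kDelta_eq, kE, kO]
  have hT : TD Δ = (TD Δ ∩ {p | Even (p.1 + p.2)}) ∪ (TD Δ ∩ {p | ¬ Even (p.1 + p.2)}) := by
    ext p
    simp only [Set.mem_union, Set.mem_inter_iff, Set.mem_setOf_eq]
    tauto
  have hdisj : Disjoint (cluster ζ '' (TD Δ ∩ {p | Even (p.1 + p.2)}))
      (cluster ζ '' (TD Δ ∩ {p | ¬ Even (p.1 + p.2)})) := by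
    rw [Set.disjoint_left]
    rintro C ⟨p, ⟨-, hp⟩, rfl⟩ ⟨r, ⟨-, hr⟩, hCr⟩
    have : ConnectedIn ζ r p := by
      have : p ∈ cluster ζ r := hCr ▸ mem_cluster_self ζ p
      exact this
    exact hr ((connectedIn_parity this).2 hp)
  conv_lhs => rw [hT, Set.image_union]
  exact Set.ncard_union_eq hdisj (((TD_finite hΔ).inter_of_left _).image _)
    (((TD_finite hΔ).inter_of_left _).image _)

lemma kE_congr {Δ : Set Edge} {ζ ζ' : SIConf} (h : ∀ e, inL e → ζ e = ζ' e) :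
    kE Δ ζ = kE Δ ζ' := by
  unfold kE
  congr 1
  apply Set.image_congr
  rintro p ⟨-, hp⟩
  exact cluster_congr (fun e he => h e ((epar_iff_inL e).1 (he.2 hp)))

lemma kO_congr {Δ : Set Edge} {ζ ζ' : SIConf} (h : ∀ e, ¬ inL e → ζ e = ζ' e) :
    kO Δ ζ = kO Δ ζ' := by
  unfold kO
  congr 1
  apply Set.image_congr
  rintro p ⟨-, hp⟩
  refine cluster_congr (fun e he => h e ?_)
  intro hL
  exact hp (he.1 ((epar_iff_inL e).2 hL))

open scoped Classical in
noncomputable def resL (ζ : SIConf) : SIConf := fun e => if inL e then ζ e else false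

open scoped Classical in
noncomputable def resD (ζ : SIConf) : SIConf := fun e => if inL e then false else ζ e

lemma k_supermod_po {Δ : Set Edge} (hΔ : Δ.Finite) (η ξ : SIConf)
    (hoffL : ∀ e ∉ Δ, inL e → η e = true → ξ e = true)
    (hoffD : ∀ e ∉ Δ, ¬ inL e → ξ e = true → η e = true) :
    kDelta Δ η + kDelta Δ ξ ≤ kDelta Δ (pomeet η ξ) + kDelta Δ (pojoin η ξ) := by
  classical
  -- even part
  have hEmin : pmin (resL η) (resL ξ) = resL (pomeet η ξ) := by
    funext e; by_cases h : inL e <;> simp [pmin, resL, pomeet, h]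
  have hEmax : pmax (resL η) (resL ξ) = resL (pojoin η ξ) := by
    funext e; by_cases h : inL e <;> simp [pmax, resL, pojoin, h]
  have hkresL : ∀ ζ : SIConf, kDelta Δ (resL ζ) = kE Δ ζ + kO Δ (resL η) := by
    intro ζ
    rw [kDelta_split hΔ]
    congr 1
    · exact kE_congr (fun e he => by simp [resL, he])
    · exact kO_congr (fun e he => by simp [resL, (fun h => he h : ¬ inL e)])
  have hE := k_supermod hΔ (resL η) (resL ξ) (fun e he h1 => by
    by_cases hL : inL e
    · simp only [resL, hL, if_true] at h1 ⊢
      exact hoffL e he hL h1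
    · simp [resL, hL] at h1)
  rw [hEmin, hEmax, hkresL, hkresL, hkresL, hkresL] at hE
  -- odd part
  have hOmin : pmin (resD ξ) (resD η) = resD (pojoin η ξ) := by
    funext e; by_cases h : inL e <;> simp [pmin, resD, pojoin, h, Bool.and_comm]
  have hOmax : pmax (resD ξ) (resD η) = resD (pomeet η ξ) := by
    funext e; by_cases h : inL e <;> simp [pmax, resD, pomeet, h, Bool.or_comm]
  have hkresD : ∀ ζ : SIConf, kDelta Δ (resD ζ) = kE Δ (resD η) + kO Δ ζ := by
    intro ζ
    rw [kDelta_split hΔ]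
    congr 1
    · exact kE_congr (fun e he => by simp [resD, he])
    · exact kO_congr (fun e he => by simp [resD, (fun h => he h : ¬ inL e)])
  have hO := k_supermod hΔ (resD ξ) (resD η) (fun e he h1 => by
    by_cases hL : inL e
    · simp [resD, hL] at h1
    · simp only [resD, hL, if_false] at h1 ⊢
      exact hoffD e he hL h1)
  rw [hOmin, hOmax, hkresD, hkresD, hkresD, hkresD] at hO
  rw [kDelta_split hΔ η, kDelta_split hΔ ξ, kDelta_split hΔ (pomeet η ξ),
    kDelta_split hΔ (pojoin η ξ)]
  omega

lemma inL_cross (x : Vx) : inL (x, true) ↔ ¬ inL (x, false) := by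
  simp only [inL]
  by_cases h : Even (x.1 + x.2) <;> simp [h]

lemma ncc_pomeet {η ξ : SIConf} (hη : NoClosedCross η) (hξ : NoClosedCross ξ) :
    NoClosedCross (pomeet η ξ) := by
  intro x
  by_cases hL : inL (x, false) <;>
    have hL2 := (inL_cross x) <;>
    rcases hη x with h | h <;> rcases hξ x with h' | h' <;>
    simp [pomeet, hL, hL2, h, h'] <;> simp_all [pomeet]
lemma ncc_pojoin {η ξ : SIConf} (hη : NoClosedCross η) (hξ : NoClosedCross ξ) :
    NoClosedCross (pojoin η ξ) := by
  intro x
  by_cases hL : inL (x, false) <;>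
    have hL2 := (inL_cross x) <;>
    rcases hη x with h | h <;> rcases hξ x with h' | h' <;>
    simp [pojoin, hL, hL2, h, h'] <;> simp_all [pojoin]

open scoped Classical in
lemma NDelta_card {Δ : Set Edge} (hΔ : Δ.Finite) (ζ : SIConf) :
    NDelta Δ ζ = ((hΔ.toFinset.image Prod.fst).filter
      (fun x => OpenCross ζ x ∧ ((x, false) ∈ Δ ∨ (x, true) ∈ Δ))).card := by
  rw [NDelta, ← Set.ncard_coe_finset]
  congr 1
  ext x
  simp only [Finset.coe_filter, Finset.mem_image, Set.Finite.mem_toFinset, Set.mem_setOf_eq]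
  constructor
  · rintro ⟨h1, h2⟩
    refine ⟨⟨(x, (x,true) ∈ Δ ∧ ¬ (x,false) ∈ Δ), ?_, rfl⟩, h1, h2⟩
    by_cases hf : (x, false) ∈ Δ
    · simpa [hf] using hf
    · rcases h2 with h | h
      · exact absurd h hf
      · simpa [h, hf] using h
  · rintro ⟨-, h1, h2⟩
    exact ⟨h1, h2⟩

open scoped Classical in
lemma N_modular {Δ : Set Edge} (hΔ : Δ.Finite) {η ξ : SIConf} (hη : NoClosedCross η)
    (hξ : NoClosedCross ξ) :
    NDelta Δ (pomeet η ξ) + NDelta Δ (pojoin η ξ) = NDelta Δ η + NDelta Δ ξ := by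
  rw [NDelta_card hΔ, NDelta_card hΔ, NDelta_card hΔ, NDelta_card hΔ]
  rw [Finset.card_filter, Finset.card_filter, Finset.card_filter, Finset.card_filter,
    ← Finset.sum_add_distrib, ← Finset.sum_add_distrib]
  refine Finset.sum_congr rfl (fun x _ => ?_)
  by_cases hD : ((x, false) ∈ Δ ∨ (x, true) ∈ Δ)
  · by_cases hL : inL (x, false) <;>
      have hL2 := (inL_cross x) <;>
      rcases hη x with h | h <;> rcases hξ x with h' | h' <;>
      cases ha : η (x, false) <;> cases hb : η (x, true) <;>
      cases hc : ξ (x, false) <;> cases hd : ξ (x, true) <;>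
      simp_all [OpenCross, pomeet, pojoin, hD]
  · simp [hD]

open scoped Classical in
/-- The configuration encoded by a function on `Δ` (with boundary condition `τ` off `Δ`);
bits on dual edges are flipped so that the product order corresponds to `⪯`. -/
noncomputable def cfg {Δ : Set Edge} (hΔ : Δ.Finite) (τ : SIConf)
    (g : {e // e ∈ hΔ.toFinset} → Bool) : SIConf :=
  fun e => if h : e ∈ hΔ.toFinset then (if inL e then g ⟨e, h⟩ else !(g ⟨e, h⟩)) else τ e

open scoped Classical in
/-- The lattice element encoded by a configuration. -/
noncomputable def gof {Δ : Set Edge} (hΔ : Δ.Finite) (ζ : SIConf) :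
    {e // e ∈ hΔ.toFinset} → Bool :=
  fun e => if inL e.1 then ζ e.1 else !(ζ e.1)

lemma cfg_off {Δ : Set Edge} (hΔ : Δ.Finite) (τ : SIConf) (g : {e // e ∈ hΔ.toFinset} → Bool)
    {e : Edge} (he : e ∉ Δ) : cfg hΔ τ g e = τ e := by
  rw [cfg, dif_neg (by simpa using he)]

lemma cfg_gof {Δ : Set Edge} (hΔ : Δ.Finite) (τ : SIConf) {η : SIConf}
    (h : ∀ e ∉ Δ, η e = τ e) : cfg hΔ τ (gof hΔ η) = η := by
  funext e
  by_cases he : e ∈ hΔ.toFinset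
  · rw [cfg, dif_pos he, gof]
    by_cases hL : inL e <;> simp [hL]
  · rw [cfg, dif_neg he, h e (by simpa using he)]

lemma gof_cfg {Δ : Set Edge} (hΔ : Δ.Finite) (τ : SIConf)
    (g : {e // e ∈ hΔ.toFinset} → Bool) : gof hΔ (cfg hΔ τ g) = g := by
  funext e
  rw [gof, cfg]
  rcases e with ⟨e, he⟩
  by_cases hL : inL e <;> simp [hL, he]

lemma cfg_mono {Δ : Set Edge} (hΔ : Δ.Finite) (τ : SIConf)
    {g g' : {e // e ∈ hΔ.toFinset} → Bool} (hgg' : g ≤ g') :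
    PO (cfg hΔ τ g) (cfg hΔ τ g') := by
  intro e
  by_cases he : e ∈ hΔ.toFinset
  · refine ⟨fun hL => ?_, fun hL => ?_⟩ <;> rw [cfg, cfg, dif_pos he, dif_pos he]
    · rw [if_pos hL, if_pos hL]; exact hgg' ⟨e, he⟩
    · rw [if_neg hL, if_neg hL]
      have := hgg' ⟨e, he⟩
      cases hg : g ⟨e, he⟩ <;> cases hg' : g' ⟨e, he⟩ <;> simp_all [Bool.le_iff_imp]
  · rw [cfg, dif_neg he, cfg, dif_neg he]
    exact ⟨fun _ => le_refl _, fun _ => le_refl _⟩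

lemma cfg_bc_mono {Δ : Set Edge} (hΔ : Δ.Finite) {τ τ' : SIConf} (hττ' : PO τ τ')
    (g : {e // e ∈ hΔ.toFinset} → Bool) : PO (cfg hΔ τ g) (cfg hΔ τ' g) := by
  intro e
  by_cases he : e ∈ hΔ.toFinset
  · rw [cfg, cfg, dif_pos he, dif_pos he]
    exact ⟨fun _ => le_refl _, fun _ => le_refl _⟩
  · rw [cfg, cfg, dif_neg he, dif_neg he]
    exact hττ' e

lemma cfg_inf {Δ : Set Edge} (hΔ : Δ.Finite) {τ τ' : SIConf} (hττ' : PO τ τ')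
    (g g' : {e // e ∈ hΔ.toFinset} → Bool) :
    cfg hΔ τ (g ⊓ g') = pomeet (cfg hΔ τ g) (cfg hΔ τ' g') := by
  funext e
  by_cases he : e ∈ hΔ.toFinset <;> by_cases hL : inL e
  · simp only [cfg, pomeet, dif_pos he, if_pos hL, Pi.inf_apply]
    cases g ⟨e, he⟩ <;> cases g' ⟨e, he⟩ <;> rfl
  · simp only [cfg, pomeet, dif_pos he, if_neg hL, Pi.inf_apply]
    cases g ⟨e, he⟩ <;> cases g' ⟨e, he⟩ <;> rfl
  · simp only [cfg, pomeet, dif_neg he, if_pos hL]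
    have := (hττ' e).1 hL
    cases hx : τ e <;> cases hy : τ' e <;> simp_all [Bool.le_iff_imp]
  · simp only [cfg, pomeet, dif_neg he, if_neg hL]
    have := (hττ' e).2 hL
    cases hx : τ e <;> cases hy : τ' e <;> simp_all [Bool.le_iff_imp]

lemma cfg_sup {Δ : Set Edge} (hΔ : Δ.Finite) {τ τ' : SIConf} (hττ' : PO τ τ')
    (g g' : {e // e ∈ hΔ.toFinset} → Bool) :
    cfg hΔ τ' (g ⊔ g') = pojoin (cfg hΔ τ g) (cfg hΔ τ' g') := by
  funext e
  by_cases he : e ∈ hΔ.toFinset <;> by_cases hL : inL e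
  · simp only [cfg, pojoin, dif_pos he, if_pos hL, Pi.sup_apply]
    cases g ⟨e, he⟩ <;> cases g' ⟨e, he⟩ <;> rfl
  · simp only [cfg, pojoin, dif_pos he, if_neg hL, Pi.sup_apply]
    cases g ⟨e, he⟩ <;> cases g' ⟨e, he⟩ <;> rfl
  · simp only [cfg, pojoin, dif_neg he, if_pos hL]
    have := (hττ' e).1 hL
    cases hx : τ e <;> cases hy : τ' e <;> simp_all [Bool.le_iff_imp]
  · simp only [cfg, pojoin, dif_neg he, if_neg hL]
    have := (hττ' e).2 hL
    cases hx : τ e <;> cases hy : τ' e <;> simp_all [Bool.le_iff_imp]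

/-- real-valued weight -/
noncomputable def Wr (Δ : Set Edge) (α q : ℝ) (ζ : SIConf) : ℝ :=
  α ^ NDelta Δ ζ * q ^ kDelta Δ ζ

lemma Wr_pos {Δ : Set Edge} {α q : ℝ} (hα : 0 < α) (hq : 1 ≤ q) (ζ : SIConf) :
    0 < Wr Δ α q ζ :=
  mul_pos (pow_pos hα _) (pow_pos (lt_of_lt_of_le one_pos hq) _)

lemma SIweight_eq (Δ : Set Edge) (α q : ℝ) (ζ : SIConf) :
    SIweight Δ α q ζ = ENNReal.ofReal (Wr Δ α q ζ) := rfl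

lemma weight_ineq {Δ : Set Edge} (hΔ : Δ.Finite) {α q : ℝ} (hα : 0 < α) (hq : 1 ≤ q)
    {η ξ : SIConf} (hη : NoClosedCross η) (hξ : NoClosedCross ξ)
    (hoffL : ∀ e ∉ Δ, inL e → η e = true → ξ e = true)
    (hoffD : ∀ e ∉ Δ, ¬ inL e → ξ e = true → η e = true) :
    Wr Δ α q η * Wr Δ α q ξ ≤ Wr Δ α q (pomeet η ξ) * Wr Δ α q (pojoin η ξ) := by
  have hN := N_modular hΔ hη hξ
  have hk := k_supermod_po hΔ η ξ hoffL hoffD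
  have h1 : Wr Δ α q η * Wr Δ α q ξ =
      α ^ (NDelta Δ η + NDelta Δ ξ) * q ^ (kDelta Δ η + kDelta Δ ξ) := by
    rw [Wr, Wr, pow_add, pow_add]; ring
  have h2 : Wr Δ α q (pomeet η ξ) * Wr Δ α q (pojoin η ξ) =
      α ^ (NDelta Δ η + NDelta Δ ξ) * q ^ (kDelta Δ (pomeet η ξ) + kDelta Δ (pojoin η ξ)) := by
    rw [Wr, Wr, ← hN, pow_add, pow_add]; ring
  rw [h1, h2]
  exact mul_le_mul_of_nonneg_left (pow_le_pow_right₀ hq hk) (le_of_lt (pow_pos hα _))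

lemma finite_SIok {Δ : Set Edge} (hΔ : Δ.Finite) (τ : SIConf) :
    Finite {η : SIConf // SIok Δ τ η} := by
  refine Finite.of_injective (fun η => gof hΔ η.1) (fun a b hab => Subtype.ext ?_)
  rw [← cfg_gof hΔ τ a.2.2, ← cfg_gof hΔ τ b.2.2]
  exact congrArg _ hab

lemma SIfin_integral {Δ : Set Edge} (α q : ℝ) (τ : SIConf)
    [Fintype {η : SIConf // SIok Δ τ η}]
    (f : SIConf → ℝ) (hfm : Measurable f) {M : ℝ} (hfb : ∀ η, |f η| ≤ M) :
    ∫ η, f η ∂(SIfin Δ α q τ) =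
      ((∑ η : {η : SIConf // SIok Δ τ η}, SIweight Δ α q η.1).toReal)⁻¹ *
        ∑ η : {η : SIConf // SIok Δ τ η}, (SIweight Δ α q η.1).toReal * f η.1 := by
  have hint : ∀ η : {η : SIConf // SIok Δ τ η},
      MeasureTheory.Integrable f (SIweight Δ α q η.1 • MeasureTheory.Measure.dirac η.1) := by
    intro η
    refine MeasureTheory.Integrable.smul_measure ?_ ENNReal.ofReal_ne_top
    refine ⟨hfm.stronglyMeasurable.aestronglyMeasurable, ?_⟩
    exact MeasureTheory.HasFiniteIntegral.of_bounded
      (C := M) (Filter.Eventually.of_forall (fun x => by simpa using hfb x))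
  rw [SIfin, MeasureTheory.integral_smul_measure, Measure.sum_fintype,
    MeasureTheory.integral_finset_sum_measure (fun i _ => hint i)]
  rw [smul_eq_mul, tsum_fintype]
  have hterm : ∀ η : {η : SIConf // SIok Δ τ η},
      ∫ a, f a ∂(SIweight Δ α q η.1 • MeasureTheory.Measure.dirac η.1)
        = (SIweight Δ α q η.1).toReal * f η.1 := fun η => by
    rw [MeasureTheory.integral_smul_measure,
      MeasureTheory.integral_dirac' f η.1 hfm.stronglyMeasurable, smul_eq_mul]
  rw [Finset.sum_congr rfl (fun η _ => hterm η), ENNReal.toReal_inv]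

open scoped Classical in
lemma sum_SIok_eq {Δ : Set Edge} (hΔ : Δ.Finite) (τ : SIConf)
    [Fintype {η : SIConf // SIok Δ τ η}] (φ : SIConf → ℝ) :
    ∑ η : {η : SIConf // SIok Δ τ η}, φ η.1 =
      ∑ g : {e // e ∈ hΔ.toFinset} → Bool,
        if NoClosedCross (cfg hΔ τ g) then φ (cfg hΔ τ g) else 0 := by
  classical
  let eqv : {η : SIConf // SIok Δ τ η} ≃
      {g : {e // e ∈ hΔ.toFinset} → Bool // NoClosedCross (cfg hΔ τ g)} :=
    { toFun := fun η => ⟨gof hΔ η.1, by rw [cfg_gof hΔ τ η.2.2]; exact η.2.1⟩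
      invFun := fun j => ⟨cfg hΔ τ j.1, j.2, fun e he => cfg_off hΔ τ j.1 he⟩
      left_inv := fun η => Subtype.ext (cfg_gof hΔ τ η.2.2)
      right_inv := fun j => Subtype.ext (gof_cfg hΔ τ j.1) }
  rw [Fintype.sum_equiv eqv (fun η => φ η.1) (fun j => φ (cfg hΔ τ j.1))
    (fun η => by simp only [eqv, Equiv.coe_fn_mk, cfg_gof hΔ τ η.2.2])]
  rw [← Finset.sum_filter]
  exact (Finset.sum_subtype _ (fun g => by simp) (fun g => φ (cfg hΔ τ g))).symm

theorem stmt_8' (q α : ℝ) (hq : 1 ≤ q) (hα : 0 < α) (Δ : Set Edge) (hΔ : Δ.Finite)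
    (τ τ' : SIConf) (hτ : NoClosedCross τ) (hτ' : NoClosedCross τ') (hττ' : PO τ τ')
    (f : SIConf → ℝ) (hfm : Measurable f) (hfb : ∃ M, ∀ η, |f η| ≤ M)
    (hfmono : ∀ η ξ : SIConf, PO η ξ → f η ≤ f ξ) :
    ∫ η, f η ∂(SIfin Δ α q τ) ≤ ∫ η, f η ∂(SIfin Δ α q τ') := by
  classical
  obtain ⟨M, hM⟩ := hfb
  haveI h1fin : Finite {η : SIConf // SIok Δ τ η} := finite_SIok hΔ τ
  haveI h2fin : Finite {η : SIConf // SIok Δ τ' η} := finite_SIok hΔ τ'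
  haveI : Fintype {η : SIConf // SIok Δ τ η} := Fintype.ofFinite _
  haveI : Fintype {η : SIConf // SIok Δ τ' η} := Fintype.ofFinite _
  set F₀ : ({e // e ∈ hΔ.toFinset} → Bool) → ℝ :=
    fun g => if NoClosedCross (cfg hΔ τ g) then Wr Δ α q (cfg hΔ τ g) else 0 with hF₀
  set G₀ : ({e // e ∈ hΔ.toFinset} → Bool) → ℝ :=
    fun g => if NoClosedCross (cfg hΔ τ' g) then Wr Δ α q (cfg hΔ τ' g) else 0 with hG₀
  set Z1 : ℝ := ∑ g, F₀ g with hZ1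
  set Z2 : ℝ := ∑ g, G₀ g with hZ2
  have hWnn : ∀ ζ, 0 ≤ Wr Δ α q ζ := fun ζ => (Wr_pos hα hq ζ).le
  have htw : ∀ ζ, (SIweight Δ α q ζ).toReal = Wr Δ α q ζ := fun ζ => by
    rw [SIweight_eq, ENNReal.toReal_ofReal (hWnn ζ)]
  have hF₀nn : ∀ g, 0 ≤ F₀ g := by
    intro g; simp only [hF₀]; split
    · exact hWnn _
    · exact le_rfl
  have hG₀nn : ∀ g, 0 ≤ G₀ g := by
    intro g; simp only [hG₀]; split
    · exact hWnn _
    · exact le_rfl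
  -- normalizers
  have hZ1' : (∑ η : {η : SIConf // SIok Δ τ η}, SIweight Δ α q η.1).toReal = Z1 :=
    calc (∑ η : {η : SIConf // SIok Δ τ η}, SIweight Δ α q η.1).toReal
        = ∑ η : {η : SIConf // SIok Δ τ η}, (SIweight Δ α q η.1).toReal :=
          ENNReal.toReal_sum (fun a _ => by rw [SIweight_eq]; exact ENNReal.ofReal_ne_top)
      _ = ∑ η : {η : SIConf // SIok Δ τ η}, Wr Δ α q η.1 :=
          Finset.sum_congr rfl (fun η _ => htw η.1)
      _ = Z1 := sum_SIok_eq hΔ τ (Wr Δ α q)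
  have hZ2' : (∑ η : {η : SIConf // SIok Δ τ' η}, SIweight Δ α q η.1).toReal = Z2 :=
    calc (∑ η : {η : SIConf // SIok Δ τ' η}, SIweight Δ α q η.1).toReal
        = ∑ η : {η : SIConf // SIok Δ τ' η}, (SIweight Δ α q η.1).toReal :=
          ENNReal.toReal_sum (fun a _ => by rw [SIweight_eq]; exact ENNReal.ofReal_ne_top)
      _ = ∑ η : {η : SIConf // SIok Δ τ' η}, Wr Δ α q η.1 :=
          Finset.sum_congr rfl (fun η _ => htw η.1)
      _ = Z2 := sum_SIok_eq hΔ τ' (Wr Δ α q)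
  have hZ1pos : 0 < Z1 := by
    have hc : cfg hΔ τ (gof hΔ τ) = τ := cfg_gof hΔ τ (fun _ _ => rfl)
    have hmem : 0 < F₀ (gof hΔ τ) := by
      simp only [hF₀]; rw [hc, if_pos hτ]; exact Wr_pos hα hq τ
    exact Finset.sum_pos' (fun g _ => hF₀nn g) ⟨gof hΔ τ, Finset.mem_univ _, hmem⟩
  have hZ2pos : 0 < Z2 := by
    have hc : cfg hΔ τ' (gof hΔ τ') = τ' := cfg_gof hΔ τ' (fun _ _ => rfl)
    have hmem : 0 < G₀ (gof hΔ τ') := by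
      simp only [hG₀]; rw [hc, if_pos hτ']; exact Wr_pos hα hq τ'
    exact Finset.sum_pos' (fun g _ => hG₀nn g) ⟨gof hΔ τ', Finset.mem_univ _, hmem⟩
  -- integrals as sums
  have hI1 : ∫ η, f η ∂(SIfin Δ α q τ) = Z1⁻¹ * ∑ g, F₀ g * f (cfg hΔ τ g) := by
    rw [SIfin_integral α q τ f hfm hM, hZ1']
    congr 1
    calc ∑ η : {η : SIConf // SIok Δ τ η}, (SIweight Δ α q η.1).toReal * f η.1
        = ∑ η : {η : SIConf // SIok Δ τ η}, Wr Δ α q η.1 * f η.1 :=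
          Finset.sum_congr rfl (fun η _ => by rw [htw η.1])
      _ = ∑ g, if NoClosedCross (cfg hΔ τ g) then Wr Δ α q (cfg hΔ τ g) * f (cfg hΔ τ g)
            else 0 := sum_SIok_eq hΔ τ (fun ζ => Wr Δ α q ζ * f ζ)
      _ = ∑ g, F₀ g * f (cfg hΔ τ g) := by
          refine Finset.sum_congr rfl (fun g _ => ?_)
          simp only [hF₀]; split
          · rfl
          · rw [zero_mul]
  have hI2 : ∫ η, f η ∂(SIfin Δ α q τ') = Z2⁻¹ * ∑ g, G₀ g * f (cfg hΔ τ' g) := by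
    rw [SIfin_integral α q τ' f hfm hM, hZ2']
    congr 1
    calc ∑ η : {η : SIConf // SIok Δ τ' η}, (SIweight Δ α q η.1).toReal * f η.1
        = ∑ η : {η : SIConf // SIok Δ τ' η}, Wr Δ α q η.1 * f η.1 :=
          Finset.sum_congr rfl (fun η _ => by rw [htw η.1])
      _ = ∑ g, if NoClosedCross (cfg hΔ τ' g) then Wr Δ α q (cfg hΔ τ' g) * f (cfg hΔ τ' g)
            else 0 := sum_SIok_eq hΔ τ' (fun ζ => Wr Δ α q ζ * f ζ)
      _ = ∑ g, G₀ g * f (cfg hΔ τ' g) := by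
          refine Finset.sum_congr rfl (fun g _ => ?_)
          simp only [hG₀]; split
          · rfl
          · rw [zero_mul]
  -- Holley setup
  set μf : ({e // e ∈ hΔ.toFinset} → Bool) → ℝ := fun g => f (cfg hΔ τ g) + M with hμf
  set F : ({e // e ∈ hΔ.toFinset} → Bool) → ℝ := fun g => F₀ g / Z1 with hF
  set G : ({e // e ∈ hΔ.toFinset} → Bool) → ℝ := fun g => G₀ g / Z2 with hG
  have hFnn : (0 : ({e // e ∈ hΔ.toFinset} → Bool) → ℝ) ≤ F := fun g => div_nonneg (hF₀nn g) hZ1pos.le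
  have hGnn : (0 : ({e // e ∈ hΔ.toFinset} → Bool) → ℝ) ≤ G := fun g => div_nonneg (hG₀nn g) hZ2pos.le
  have hμnn : (0 : ({e // e ∈ hΔ.toFinset} → Bool) → ℝ) ≤ μf := by
    intro g
    have h3 := hM (cfg hΔ τ g)
    have h2 := neg_abs_le (f (cfg hΔ τ g))
    simp only [hμf, Pi.zero_apply]
    linarith
  have hμmono : Monotone μf := by
    intro g g' hgg'
    simp only [hμf]
    exact add_le_add_left (hfmono _ _ (cfg_mono hΔ τ hgg')) M
  have hsumF : ∑ g, F g = 1 := by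
    simp only [hF]; rw [← Finset.sum_div, ← hZ1]; exact div_self hZ1pos.ne'
  have hsumG : ∑ g, G g = 1 := by
    simp only [hG]; rw [← Finset.sum_div, ← hZ2]; exact div_self hZ2pos.ne'
  have hcond : ∀ a b, F a * G b ≤ F (a ⊓ b) * G (a ⊔ b) := by
    intro a b
    have h0 : F₀ a * G₀ b ≤ F₀ (a ⊓ b) * G₀ (a ⊔ b) := by
      by_cases ha : NoClosedCross (cfg hΔ τ a)
      · by_cases hb : NoClosedCross (cfg hΔ τ' b)
        · have hmeet := cfg_inf hΔ hττ' a b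
          have hjoin := cfg_sup hΔ hττ' a b
          have hm : NoClosedCross (cfg hΔ τ (a ⊓ b)) := by
            rw [hmeet]; exact ncc_pomeet ha hb
          have hj : NoClosedCross (cfg hΔ τ' (a ⊔ b)) := by
            rw [hjoin]; exact ncc_pojoin ha hb
          simp only [hF₀, hG₀]
          rw [if_pos ha, if_pos hb, if_pos hm, if_pos hj, hmeet, hjoin]
          refine weight_ineq hΔ hα hq ha hb ?_ ?_
          · intro e he hL h1
            rw [cfg_off hΔ τ' b he]
            rw [cfg_off hΔ τ a he] at h1
            exact Bool.le_iff_imp.1 ((hττ' e).1 hL) h1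
          · intro e he hL h1
            rw [cfg_off hΔ τ a he]
            rw [cfg_off hΔ τ' b he] at h1
            exact Bool.le_iff_imp.1 ((hττ' e).2 hL) h1
        · simp only [hG₀]; rw [if_neg hb, mul_zero]
          exact mul_nonneg (hF₀nn _) (hG₀nn _)
      · simp only [hF₀]; rw [if_neg ha, zero_mul]
        exact mul_nonneg (hF₀nn _) (hG₀nn _)
    simp only [hF, hG]
    rw [div_mul_div_comm, div_mul_div_comm]
    exact div_le_div_of_nonneg_right h0 (mul_pos hZ1pos hZ2pos).le
  have hHolley : ∑ g, μf g * F g ≤ ∑ g, μf g * G g :=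
    holley F G μf hμnn hFnn hGnn hμmono (hsumF.trans hsumG.symm) hcond
  -- unpack
  have hexp1 : ∑ g, μf g * F g = Z1⁻¹ * (∑ g, F₀ g * f (cfg hΔ τ g)) + M := by
    have hterm : ∀ g, μf g * F g = Z1⁻¹ * (F₀ g * f (cfg hΔ τ g)) + M * F g := by
      intro g; simp only [hμf, hF]; rw [div_eq_mul_inv]; ring
    rw [Finset.sum_congr rfl (fun g _ => hterm g), Finset.sum_add_distrib,
      ← Finset.mul_sum, ← Finset.mul_sum, hsumF, mul_one]
  have hexp2 : ∑ g, μf g * G g ≤ Z2⁻¹ * (∑ g, G₀ g * f (cfg hΔ τ' g)) + M := by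
    have hstep : ∑ g, μf g * G g ≤ ∑ g, (f (cfg hΔ τ' g) + M) * G g := by
      refine Finset.sum_le_sum (fun g _ => mul_le_mul_of_nonneg_right ?_ (hGnn g))
      exact add_le_add_left (hfmono _ _ (cfg_bc_mono hΔ hττ' g)) M
    have hterm : ∀ g, (f (cfg hΔ τ' g) + M) * G g
        = Z2⁻¹ * (G₀ g * f (cfg hΔ τ' g)) + M * G g := by
      intro g; simp only [hG]; rw [div_eq_mul_inv]; ring
    calc ∑ g, μf g * G g ≤ ∑ g, (f (cfg hΔ τ' g) + M) * G g := hstep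
      _ = Z2⁻¹ * (∑ g, G₀ g * f (cfg hΔ τ' g)) + M := by
          rw [Finset.sum_congr rfl (fun g _ => hterm g), Finset.sum_add_distrib,
            ← Finset.mul_sum, ← Finset.mul_sum, hsumG, mul_one]
  rw [hI1, hI2]
  have := hHolley
  rw [hexp1] at this
  have h2 := le_trans this hexp2
  linarith

/-- Fix `q ≥ 1` and `α > 0`.  Let `Δ ⊆ E(𝕃) ∪ E(𝕃*)` be finite and let `τ ⪯ τ'` be two boundary
conditions in `Ω^SI`.  Then `P^{SI,τ'}_{Δ,α,q}` stochastically dominates `P^{SI,τ}_{Δ,α,q}`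
with respect to `⪯`: for every bounded measurable `⪯`-increasing function `f`,
`∫ f dP^{SI,τ}_{Δ,α,q} ≤ ∫ f dP^{SI,τ'}_{Δ,α,q}`. -/
theorem stmt_8 (q α : ℝ) (hq : 1 ≤ q) (hα : 0 < α) (Δ : Set Edge) (hΔ : Δ.Finite)
    (τ τ' : SIConf) (hτ : NoClosedCross τ) (hτ' : NoClosedCross τ') (hττ' : PO τ τ')
    (f : SIConf → ℝ) (hfm : Measurable f) (hfb : ∃ M, ∀ η, |f η| ≤ M)
    (hfmono : ∀ η ξ : SIConf, PO η ξ → f η ≤ f ξ) :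
    ∫ η, f η ∂(SIfin Δ α q τ) ≤ ∫ η, f η ∂(SIfin Δ α q τ') := by
  exact stmt_8' q α hq hα Δ hΔ τ τ' hτ hτ' hττ' f hfm hfb hfmono

end SixVertex
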